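/- Let p_1 < p_2 < ... < p_m be real numbers with positive real weights r_1, ..., r_m, and define t_k = Σ_{l=1}^m r_l p_l^k. Then for every k with 1 ≤ k ≤ m, the determinant of the k×k Hankel matrix H_k = [t_{i+j-2}]_{i,j=1..k} equals Σ_{1 ≤ i_1 < ... < i_k ≤ m} r_{i_1}···r_{i_k} ∏_{1 ≤ j < l ≤ k} (p_{i_j} - p_{i_l})^2, and in particular det H_k > 0. -/

import Mathlib

open Finset Matrix

lemma aux_det_mul_rect {k m : ℕ} (A : Matrix (Fin k) (Fin m) ℝ) (B : Matrix (Fin m) (Fin k) ℝ) :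
    (A * B).det = ∑ f : Fin k → Fin m, (∏ i, A i (f i)) * (B.submatrix f id).det := by
  have h1 : (A * B) = Matrix.of fun i => ∑ l, A i l • B l := by
    ext i j; simp [Matrix.mul_apply]
  rw [h1]
  have h2 := (Matrix.detRowAlternating :
      (Fin k → ℝ) [⋀^Fin k]→ₗ[ℝ] ℝ).toMultilinearMap.map_sum
      (g := fun (i : Fin k) (l : Fin m) => A i l • B l)
  simp only [AlternatingMap.coe_multilinearMap] at h2
  show Matrix.detRowAlternating _ = _
  rw [show (Matrix.of fun i => ∑ l : Fin m, A i l • B l) =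
    (fun i => ∑ l : Fin m, A i l • B l) from rfl, h2]
  refine Finset.sum_congr rfl fun f _ => ?_
  have := (Matrix.detRowAlternating :
      (Fin k → ℝ) [⋀^Fin k]→ₗ[ℝ] ℝ).toMultilinearMap.map_smul_univ
      (fun i => A i (f i)) (fun i => B (f i))
  simp only [AlternatingMap.coe_multilinearMap] at this
  rw [this, smul_eq_mul]
  rfl

lemma aux_prod_reindex {k m : ℕ} (s : Finset (Fin m)) (hs : s.card = k) (f : Fin m → ℝ) :
    ∏ x ∈ s, f x = ∏ i : Fin k, f (s.orderEmbOfFin hs i) := by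
  refine (Finset.prod_bij (fun (i : Fin k) _ => s.orderEmbOfFin hs i)
    (fun i _ => s.orderEmbOfFin_mem hs i) ?_ ?_ (fun i _ => rfl)).symm
  · intro a _ b _ h
    exact (s.orderEmbOfFin hs).injective h
  · intro b hb
    have : b ∈ Set.range (s.orderEmbOfFin hs) := by
      rw [Finset.range_orderEmbOfFin]; exact hb
    obtain ⟨i, hi⟩ := this
    exact ⟨i, Finset.mem_univ i, hi⟩

theorem stmt_0 (m : ℕ) (p r : Fin m → ℝ) (hp : StrictMono p) (hr : ∀ i, 0 < r i)
    (t : ℕ → ℝ) (ht : ∀ k, t k = ∑ l, r l * p l ^ k)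
    (k : ℕ) (hk1 : 1 ≤ k) (hk2 : k ≤ m) :
    ((Matrix.of fun i j : Fin k => t ((i : ℕ) + (j : ℕ))).det =
      ∑ s ∈ Finset.powersetCard k (Finset.univ : Finset (Fin m)),
        ((∏ i ∈ s, r i) * ∏ i ∈ s, ∏ j ∈ s, (if i < j then (p i - p j) ^ 2 else 1))) ∧
    0 < (Matrix.of fun i j : Fin k => t ((i : ℕ) + (j : ℕ))).det := by
  set A : Matrix (Fin k) (Fin m) ℝ := Matrix.of fun i l => r l * p l ^ (i : ℕ) with hA
  set B : Matrix (Fin m) (Fin k) ℝ := Matrix.of fun l j => p l ^ (j : ℕ) with hB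
  have hABd : (Matrix.of fun i j : Fin k => t ((i : ℕ) + (j : ℕ))) = A * B := by
    ext i j
    simp only [Matrix.of_apply, Matrix.mul_apply, ht, hA, hB]
    exact Finset.sum_congr rfl fun l _ => by rw [pow_add]; ring
  have hdet : (Matrix.of fun i j : Fin k => t ((i : ℕ) + (j : ℕ))).det =
      ∑ s ∈ Finset.powersetCard k (Finset.univ : Finset (Fin m)),
        ((∏ i ∈ s, r i) * ∏ i ∈ s, ∏ j ∈ s, (if i < j then (p i - p j) ^ 2 else 1)) := by
    rw [hABd, aux_det_mul_rect]
    -- restrict to injective functions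
    rw [show (Finset.univ : Finset (Fin k → Fin m)) =
        (Finset.univ : Finset (Fin k → Fin m)) from rfl]
    have hsub : ∑ f : Fin k → Fin m, (∏ i, A i (f i)) * (B.submatrix f id).det
        = ∑ f ∈ Finset.univ.filter (fun f : Fin k → Fin m => Function.Injective f),
            (∏ i, A i (f i)) * (B.submatrix f id).det := by
      refine (Finset.sum_subset (Finset.filter_subset _ _) ?_).symm
      intro f _ hf
      simp only [Finset.mem_filter, Finset.mem_univ, true_and] at hf
      rw [Function.Injective] at hf
      push_neg at hf
      obtain ⟨i, j, hij, hne⟩ := hf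
      have : (B.submatrix f id).det = 0 := by
        refine Matrix.det_zero_of_row_eq hne ?_
        funext c
        simp [Matrix.submatrix_apply, hij]
      rw [this, mul_zero]
    rw [hsub]
    -- fiberwise over image
    rw [← Finset.sum_fiberwise_of_maps_to
      (g := fun f : Fin k → Fin m => Finset.image f Finset.univ)
      (t := Finset.powersetCard k (Finset.univ : Finset (Fin m)))
      (fun f hf => by
        simp only [Finset.mem_filter, Finset.mem_univ, true_and] at hf
        rw [Finset.mem_powersetCard_univ, Finset.card_image_of_injective _ hf,
          Finset.card_univ, Fintype.card_fin])]
    refine Finset.sum_congr rfl fun s hs => ?_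
    have hcard : s.card = k := (Finset.mem_powersetCard_univ.mp hs)
    set e := s.orderEmbOfFin hcard with he
    -- fiber = permutations
    have hfiber : ∑ f ∈ (Finset.univ.filter
          (fun f : Fin k → Fin m => Function.Injective f)).filter
          (fun f => Finset.image f Finset.univ = s),
          (∏ i, A i (f i)) * (B.submatrix f id).det
        = ∑ σ : Equiv.Perm (Fin k),
            (∏ i, A i (e (σ i))) * (B.submatrix (fun i => e (σ i)) id).det := by
      refine (Finset.sum_bij (fun (σ : Equiv.Perm (Fin k)) _ => fun i => e (σ i))
        ?_ ?_ ?_ (fun σ _ => rfl)).symm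
      · intro σ _
        simp only [Finset.mem_filter, Finset.mem_univ, true_and]
        constructor
        · exact e.injective.comp σ.injective
        · apply Finset.eq_of_subset_of_card_le
          · intro x hx
            simp only [Finset.mem_image] at hx
            obtain ⟨i, _, hi⟩ := hx
            rw [← hi]; exact s.orderEmbOfFin_mem hcard _
          · have hinj2 : Function.Injective (fun i => e (σ i)) :=
              fun a b h => σ.injective (e.injective h)
            rw [hcard, Finset.card_image_of_injective _ hinj2,
              Finset.card_univ, Fintype.card_fin]
      · intro σ₁ _ σ₂ _ h
        exact Equiv.ext fun i => e.injective (congrFun h i)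
      · intro f hf
        simp only [Finset.mem_filter, Finset.mem_univ, true_and] at hf
        obtain ⟨hinj, himg⟩ := hf
        have hmem : ∀ i, f i ∈ s := fun i => by
          rw [← himg]; exact Finset.mem_image_of_mem f (Finset.mem_univ i)
        set g : Fin k → Fin k := fun i => (s.orderIsoOfFin hcard).symm ⟨f i, hmem i⟩ with hg
        have hginj : Function.Injective g := by
          intro a b hab
          apply hinj
          have h2 : ((s.orderIsoOfFin hcard) (g a) : Fin m)
              = ((s.orderIsoOfFin hcard) (g b) : Fin m) := by rw [hab]
          rw [hg] at h2
          simpa using h2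
        have hgbij : Function.Bijective g := Finite.injective_iff_bijective.mp hginj
        refine ⟨Equiv.ofBijective g hgbij, Finset.mem_univ _, ?_⟩
        funext i
        show e (g i) = f i
        rw [hg]
        show ((s.orderIsoOfFin hcard) ((s.orderIsoOfFin hcard).symm ⟨f i, hmem i⟩) : Fin m) = f i
        rw [OrderIso.apply_symm_apply]
    rw [hfiber]
    -- evaluate the permutation sum
    set V : ℝ := ∏ i : Fin k, ∏ j ∈ Finset.Ioi i, (p (e j) - p (e i)) with hV
    have hBdet : (B.submatrix (fun i => e i) id).det = V := by
      have : B.submatrix (fun i => e i) id = Matrix.vandermonde (fun i => p (e i)) := by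
        ext i j; simp [hB, Matrix.vandermonde]
      rw [this, Matrix.det_vandermonde]
    have hterm : ∀ σ : Equiv.Perm (Fin k),
        (∏ i, A i (e (σ i))) * (B.submatrix (fun i => e (σ i)) id).det
        = (∏ i, r (e i)) * ((Equiv.Perm.sign σ : ℤ) *
            ∏ i, p (e (σ i)) ^ (i : ℕ)) * V := by
      intro σ
      have h1 : (B.submatrix (fun i => e (σ i)) id)
          = (B.submatrix (fun i => e i) id).submatrix σ id := by
        ext i j; simp
      have h2 : (B.submatrix (fun i => e (σ i)) id).det
          = (Equiv.Perm.sign σ : ℤ) * V := by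
        rw [h1, Matrix.det_permute, hBdet]
      have h3 : (∏ i, A i (e (σ i)))
          = (∏ i, r (e i)) * ∏ i, p (e (σ i)) ^ (i : ℕ) := by
        simp only [hA, Matrix.of_apply]
        rw [Finset.prod_mul_distrib]
        congr 1
        exact Equiv.prod_comp σ (fun i => r (e i))
      rw [h2, h3]; ring
    rw [Finset.sum_congr rfl (fun σ _ => hterm σ)]
    have hvdm : ∑ σ : Equiv.Perm (Fin k), ((Equiv.Perm.sign σ : ℤ) : ℝ) *
        ∏ i, p (e (σ i)) ^ (i : ℕ) = V := by
      rw [hV, ← Matrix.det_vandermonde (fun i => p (e i)), Matrix.det_apply']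
      refine Finset.sum_congr rfl fun σ _ => ?_
      simp [Matrix.vandermonde_apply]
    have hsum : ∑ σ : Equiv.Perm (Fin k),
        (∏ i, r (e i)) * ((Equiv.Perm.sign σ : ℤ) *
          ∏ i, p (e (σ i)) ^ (i : ℕ)) * V
        = (∏ i, r (e i)) * (V * V) := by
      rw [← Finset.sum_mul, ← Finset.mul_sum, hvdm]
      ring
    rw [hsum]
    -- now match with the stated RHS
    rw [aux_prod_reindex s hcard r]
    rw [aux_prod_reindex s hcard
      (fun i => ∏ j ∈ s, (if i < j then (p i - p j) ^ 2 else 1))]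
    congr 1
    have : ∀ i : Fin k, ∏ j ∈ s, (if e i < j then (p (e i) - p j) ^ 2 else 1)
        = ∏ j : Fin k, (if e i < e j then (p (e i) - p (e j)) ^ 2 else 1) :=
      fun i => aux_prod_reindex s hcard _
    rw [Finset.prod_congr rfl (fun i _ => this i)]
    have hlt : ∀ a b : Fin k, e a < e b ↔ a < b := fun a b => e.lt_iff_lt
    have : ∀ i : Fin k, ∏ j : Fin k, (if e i < e j then (p (e i) - p (e j)) ^ 2 else 1)
        = ∏ j ∈ Finset.Ioi i, (p (e i) - p (e j)) ^ 2 := by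
      intro i
      rw [← Finset.prod_filter]
      apply Finset.prod_congr _ (fun _ _ => rfl)
      ext b; simp [hlt]
    rw [Finset.prod_congr rfl (fun i _ => this i)]
    rw [hV, ← Finset.prod_mul_distrib]
    refine Finset.prod_congr rfl fun i _ => ?_
    rw [← Finset.prod_mul_distrib]
    refine Finset.prod_congr rfl fun j _ => ?_
    ring
  refine ⟨hdet, ?_⟩
  rw [hdet]
  have hne : (Finset.powersetCard k (Finset.univ : Finset (Fin m))).Nonempty := by
    obtain ⟨s, _, hcard⟩ := Finset.exists_subset_card_eq (s := (Finset.univ : Finset (Fin m))) (n := k)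
      (by simpa using hk2)
    exact ⟨s, Finset.mem_powersetCard_univ.mpr hcard⟩
  refine Finset.sum_pos (fun s hs => ?_) hne
  apply mul_pos
  · exact Finset.prod_pos fun i _ => hr i
  · refine Finset.prod_pos fun i _ => Finset.prod_pos fun j _ => ?_
    by_cases h : i < j
    · simp only [if_pos h]
      apply pow_two_pos_of_ne_zero
      exact sub_ne_zero.mpr (ne_of_lt (hp h))
    · simp [h]
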